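/- Let H be a K_5-minor-free graph containing D_n (for some n ≥ 3) as an induced subgraph. Then H satisfies the first-order sentence φ asserting: there exist x_1, x_2, y, z with E(x_1,y), E(y,z), E(z,x_2), such that for all a, b with E(x_1,a), E(a,b), E(b,x_2) there exist c, d with E(x_1,c), E(a,c), E(b,c), E(b,d), E(c,d), E(d,x_2). -/

import Mathlib

/-- The ladder-with-hubs graph `G n`: vertices `v₁ = Sum.inl false`, `v₂ = Sum.inl true`,
`a i = Sum.inr (false, i)` and `b i = Sum.inr (true, i)` (`0`-based indices, so `a_1` of
the paper is `a 0`, etc.), with edges `(v₁, a i)`, `(v₂, b i)`, `(a i, b i)` for all `i`,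
and `(a i, a (i+1))`, `(b i, b (i+1))`, `(a (i+1), b i)`. -/
def Gr (n : ℕ) : SimpleGraph (Bool ⊕ Bool × Fin n) :=
  SimpleGraph.fromRel (fun u v =>
    match u, v with
    | Sum.inl c, Sum.inr (d, _) => c = d
    | Sum.inr (false, i), Sum.inr (true, j) => (i : ℕ) = (j : ℕ) ∨ (i : ℕ) = (j : ℕ) + 1
    | Sum.inr (false, i), Sum.inr (false, j) => (i : ℕ) + 1 = (j : ℕ)
    | Sum.inr (true, i), Sum.inr (true, j) => (i : ℕ) + 1 = (j : ℕ)
    | _, _ => False)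

/-- The graph `D n`: the graph `G n` together with the wrap-around edges
`(a_1, a_n)`, `(b_1, b_n)` and `(a_1, b_n)` (in `0`-based indices: `(a 0, a (n-1))`,
`(b 0, b (n-1))`, `(a 0, b (n-1))`). -/
def Dr (n : ℕ) : SimpleGraph (Bool ⊕ Bool × Fin n) :=
  SimpleGraph.fromRel (fun u v =>
    match u, v with
    | Sum.inl c, Sum.inr (d, _) => c = d
    | Sum.inr (false, i), Sum.inr (true, j) =>
        (i : ℕ) = (j : ℕ) ∨ (i : ℕ) = (j : ℕ) + 1 ∨ ((i : ℕ) = 0 ∧ (j : ℕ) = n - 1)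
    | Sum.inr (false, i), Sum.inr (false, j) =>
        (i : ℕ) + 1 = (j : ℕ) ∨ ((i : ℕ) = 0 ∧ (j : ℕ) = n - 1)
    | Sum.inr (true, i), Sum.inr (true, j) =>
        (i : ℕ) + 1 = (j : ℕ) ∨ ((i : ℕ) = 0 ∧ (j : ℕ) = n - 1)
    | _, _ => False)

/-- `G` has a `P`-minor: branch sets witnessing `P` as a minor of `G`. -/
def HasMinor {V W : Type} (G : SimpleGraph V) (P : SimpleGraph W) : Prop :=
  ∃ S : W → Set V, (∀ w, (S w).Nonempty) ∧ (∀ w, (G.induce (S w)).Connected) ∧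
    (Pairwise fun w w' => Disjoint (S w) (S w')) ∧
    ∀ w w', P.Adj w w' → ∃ u ∈ S w, ∃ v ∈ S w', G.Adj u v

namespace DrAux

/- ### connectivity helpers -/
lemma induce_singleton_connected {V : Type} (G : SimpleGraph V) (v : V) :
    (G.induce {v}).Connected := by
  haveI : Nonempty ({v} : Set V) := ⟨⟨v, rfl⟩⟩
  constructor
  intro x y
  have : x = y := Subtype.ext (by
    have hx := x.2; have hy := y.2
    simp only [Set.mem_singleton_iff] at hx hy
    rw [hx, hy])
  exact this ▸ SimpleGraph.Reachable.refl _

lemma induce_insert_connected {V : Type} {G : SimpleGraph V} {s : Set V} {u v : V}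
    (hs : (G.induce s).Connected) (hv : v ∈ s) (huv : G.Adj u v) :
    (G.induce (insert u s)).Connected := by
  have h1 : (G.induce {u, v}).Connected := SimpleGraph.induce_pair_connected_of_adj huv
  have h2 : insert u s = {u, v} ∪ s := by
    ext x; simp only [Set.mem_insert_iff, Set.mem_union, Set.mem_singleton_iff]
    constructor
    · rintro (h | h) <;> tauto
    · rintro ((h | h) | h)
      · tauto
      · right; rw [h]; exact hv
      · tauto
  rw [h2]
  exact SimpleGraph.induce_union_connected h1.preconnected hs.preconnected ⟨v, by simp, hv⟩

lemma chain_connected {V : Type} (G : SimpleGraph V) (f : ℕ → V) (M : ℕ) :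
    ∀ d m, M - m = d → m ≤ M → (∀ k, m ≤ k → k < M → G.Adj (f k) (f (k+1))) →
    (G.induce {x | ∃ k, m ≤ k ∧ k ≤ M ∧ x = f k}).Connected := by
  intro d
  induction d with
  | zero =>
    intro m hd hm _
    have : {x | ∃ k, m ≤ k ∧ k ≤ M ∧ x = f k} = {f M} := by
      ext x
      simp only [Set.mem_setOf_eq, Set.mem_singleton_iff]
      constructor
      · rintro ⟨k, h1, h2, rfl⟩; have : k = M := by omega
        rw [this]
      · rintro rfl; exact ⟨M, by omega, le_refl _, rfl⟩
    rw [this]; exact induce_singleton_connected G (f M)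
  | succ d ih =>
    intro m hd hm hadj
    have hset : {x | ∃ k, m ≤ k ∧ k ≤ M ∧ x = f k}
        = insert (f m) {x | ∃ k, m + 1 ≤ k ∧ k ≤ M ∧ x = f k} := by
      ext x
      simp only [Set.mem_setOf_eq, Set.mem_insert_iff]
      constructor
      · rintro ⟨k, h1, h2, rfl⟩
        rcases Nat.eq_or_lt_of_le h1 with h | h
        · left; rw [h]
        · right; exact ⟨k, by omega, h2, rfl⟩
      · rintro (rfl | ⟨k, h1, h2, rfl⟩)
        · exact ⟨m, le_refl _, by omega, rfl⟩
        · exact ⟨k, by omega, h2, rfl⟩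
    rw [hset]
    refine induce_insert_connected
      (ih (m+1) (by omega) (by omega) (fun k hk1 hk2 => hadj k (by omega) hk2))
      ⟨m+1, le_refl _, by omega, rfl⟩ ?_
    exact hadj m (le_refl _) (by omega)

/- ### mkMinor -/
lemma mkMinor {W : Type} (H : SimpleGraph W) (S0 S1 S2 S3 S4 : Set W)
    (hne : S0.Nonempty ∧ S1.Nonempty ∧ S2.Nonempty ∧ S3.Nonempty ∧ S4.Nonempty)
    (hconn : (H.induce S0).Connected ∧ (H.induce S1).Connected ∧ (H.induce S2).Connected ∧
      (H.induce S3).Connected ∧ (H.induce S4).Connected)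
    (hdisj : Disjoint S0 S1 ∧ Disjoint S0 S2 ∧ Disjoint S0 S3 ∧ Disjoint S0 S4 ∧
      Disjoint S1 S2 ∧ Disjoint S1 S3 ∧ Disjoint S1 S4 ∧
      Disjoint S2 S3 ∧ Disjoint S2 S4 ∧ Disjoint S3 S4)
    (hadj : (∃ u ∈ S0, ∃ v ∈ S1, H.Adj u v) ∧ (∃ u ∈ S0, ∃ v ∈ S2, H.Adj u v) ∧
      (∃ u ∈ S0, ∃ v ∈ S3, H.Adj u v) ∧ (∃ u ∈ S0, ∃ v ∈ S4, H.Adj u v) ∧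
      (∃ u ∈ S1, ∃ v ∈ S2, H.Adj u v) ∧ (∃ u ∈ S1, ∃ v ∈ S3, H.Adj u v) ∧
      (∃ u ∈ S1, ∃ v ∈ S4, H.Adj u v) ∧ (∃ u ∈ S2, ∃ v ∈ S3, H.Adj u v) ∧
      (∃ u ∈ S2, ∃ v ∈ S4, H.Adj u v) ∧ (∃ u ∈ S3, ∃ v ∈ S4, H.Adj u v)) :
    HasMinor H (⊤ : SimpleGraph (Fin 5)) := by
  obtain ⟨n0, n1, n2, n3, n4⟩ := hne
  obtain ⟨c0, c1, c2, c3, c4⟩ := hconn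
  obtain ⟨d01, d02, d03, d04, d12, d13, d14, d23, d24, d34⟩ := hdisj
  obtain ⟨a01, a02, a03, a04, a12, a13, a14, a23, a24, a34⟩ := hadj
  have sym : ∀ {s t : Set W}, (∃ u ∈ s, ∃ v ∈ t, H.Adj u v) →
      (∃ u ∈ t, ∃ v ∈ s, H.Adj u v) := by
    rintro s t ⟨u, hu, v, hv, huv⟩; exact ⟨v, hv, u, hu, huv.symm⟩
  refine ⟨![S0, S1, S2, S3, S4], ?_, ?_, ?_, ?_⟩
  · intro w; fin_cases w <;> assumption
  · intro w; fin_cases w <;> assumption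
  · intro w w' hne'
    fin_cases w <;> fin_cases w' <;>
      first
        | exact absurd rfl hne'
        | assumption
        | exact Disjoint.symm (by assumption)
  · intro w w' hww'
    rw [SimpleGraph.top_adj] at hww'
    fin_cases w <;> fin_cases w' <;>
      first
        | exact absurd rfl hww'
        | assumption
        | exact sym (by assumption)

/- ### ℕ-indexed vertices -/
def AF (n : ℕ) [NeZero n] (k : ℕ) : Bool ⊕ Bool × Fin n :=
  Sum.inr (false, ⟨k % n, Nat.mod_lt _ (Nat.pos_of_ne_zero (NeZero.ne n))⟩)

def BF (n : ℕ) [NeZero n] (k : ℕ) : Bool ⊕ Bool × Fin n :=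
  Sum.inr (true, ⟨k % n, Nat.mod_lt _ (Nat.pos_of_ne_zero (NeZero.ne n))⟩)

variable {n : ℕ} [NeZero n]

lemma AF_congr {k l : ℕ} (h : k % n = l % n) : AF n k = AF n l := by
  unfold AF; congr 2; exact Fin.ext h

lemma BF_congr {k l : ℕ} (h : k % n = l % n) : BF n k = BF n l := by
  unfold BF; congr 2; exact Fin.ext h

lemma AF_inj {k l : ℕ} (h : AF n k = AF n l) : k % n = l % n := by
  unfold AF at h; simpa [Fin.ext_iff] using h

lemma BF_inj {k l : ℕ} (h : BF n k = BF n l) : k % n = l % n := by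
  unfold BF at h; simpa [Fin.ext_iff] using h

@[simp] lemma AF_ne_BF (k l : ℕ) : AF n k ≠ BF n l := by simp [AF, BF]

@[simp] lemma AF_ne_inl (k : ℕ) (c : Bool) : AF n k ≠ Sum.inl c := by simp [AF]

@[simp] lemma BF_ne_inl (k : ℕ) (c : Bool) : BF n k ≠ Sum.inl c := by simp [BF]

lemma AF_of_fin (i : Fin n) : Sum.inr (false, i) = AF n (i : ℕ) := by
  unfold AF; congr 2; exact Fin.ext (by simp [Nat.mod_eq_of_lt i.isLt])

lemma BF_of_fin (i : Fin n) : Sum.inr (true, i) = BF n (i : ℕ) := by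
  unfold BF; congr 2; exact Fin.ext (by simp [Nat.mod_eq_of_lt i.isLt])

lemma mod_shift_ne {k d : ℕ} (hd : 0 < d) (hdn : d < n) : (k + d) % n ≠ k % n := by
  have hn : 0 < n := Nat.pos_of_ne_zero (NeZero.ne n)
  have h1 : (k + d) % n = (k % n + d) % n := by
    conv_lhs => rw [← Nat.mod_add_mod]
  have hr : k % n < n := Nat.mod_lt _ hn
  rw [h1]
  rcases Nat.lt_or_ge (k % n + d) n with h | h
  · rw [Nat.mod_eq_of_lt h]; omega
  · have h2 : k % n + d - n < n := by omega
    have h3 : (k % n + d) % n = k % n + d - n := by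
      rw [Nat.mod_eq_sub_mod h, Nat.mod_eq_of_lt h2]
    omega

lemma adj_v1_AF (k : ℕ) : (Dr n).Adj (Sum.inl false) (AF n k) := by
  simp [Dr, AF, SimpleGraph.fromRel_adj]

lemma adj_v2_BF (k : ℕ) : (Dr n).Adj (Sum.inl true) (BF n k) := by
  simp [Dr, BF, SimpleGraph.fromRel_adj]

lemma adj_rung (k : ℕ) : (Dr n).Adj (AF n k) (BF n k) := by
  simp [Dr, AF, BF, SimpleGraph.fromRel_adj]

lemma succ_mod_spec (hn : 3 ≤ n) (k : ℕ) :
    (k % n + 1 = (k+1) % n ∧ k % n + 1 < n) ∨ (k % n = n - 1 ∧ (k+1) % n = 0) := by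
  have hn0 : 0 < n := by omega
  have hr : k % n < n := Nat.mod_lt _ hn0
  have h1 : (k + 1) % n = (k % n + 1) % n := by
    conv_lhs => rw [← Nat.mod_add_mod]
  rcases Nat.lt_or_ge (k % n + 1) n with h | h
  · left; rw [h1, Nat.mod_eq_of_lt h]; omega
  · right
    have : k % n + 1 = n := by omega
    rw [h1, this, Nat.mod_self]; omega

lemma adj_AA (hn : 3 ≤ n) (k : ℕ) : (Dr n).Adj (AF n k) (AF n (k+1)) := by
  have hne : AF n k ≠ AF n (k+1) :=
    fun h => mod_shift_ne (n := n) one_pos (by omega) (AF_inj h).symm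
  simp only [Dr, AF, SimpleGraph.fromRel_adj]
  refine ⟨by simpa [AF] using hne, ?_⟩
  rcases succ_mod_spec hn k with ⟨h1, h2⟩ | ⟨h1, h2⟩
  · left; left; simpa using h1
  · right; right; simp [h1, h2]

lemma adj_BB (hn : 3 ≤ n) (k : ℕ) : (Dr n).Adj (BF n k) (BF n (k+1)) := by
  have hne : BF n k ≠ BF n (k+1) :=
    fun h => mod_shift_ne (n := n) one_pos (by omega) (BF_inj h).symm
  simp only [Dr, BF, SimpleGraph.fromRel_adj]
  refine ⟨by simpa [BF] using hne, ?_⟩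
  rcases succ_mod_spec hn k with ⟨h1, h2⟩ | ⟨h1, h2⟩
  · left; left; simpa using h1
  · right; right; simp [h1, h2]

lemma adj_diag (hn : 3 ≤ n) (k : ℕ) : (Dr n).Adj (AF n (k+1)) (BF n k) := by
  simp only [Dr, AF, BF, SimpleGraph.fromRel_adj]
  refine ⟨by simp, ?_⟩
  rcases succ_mod_spec hn k with ⟨h1, h2⟩ | ⟨h1, h2⟩
  · left; right; left; simpa using h1.symm
  · left; right; right; simp [h1, h2]

/- ### Case II minor: `a = e (AF (j+1))`, `b` outside the image. -/
lemma minor_caseII {W : Type} {H : SimpleGraph W} (hn : 3 ≤ n) (e : Dr n ↪g H)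
    (j : ℕ) (b : W) (hbr : b ∉ Set.range e)
    (hab : H.Adj (e (AF n (j+1))) b) (hbv2 : H.Adj b (e (Sum.inl true))) :
    HasMinor H (⊤ : SimpleGraph (Fin 5)) := by
  have hb' : ∀ u, b ≠ e u := fun u h => hbr ⟨u, h.symm⟩
  have hb'' : ∀ u, e u ≠ b := fun u h => hbr ⟨u, h⟩
  have einj := e.injective
  have m1 : (j+1) % n ≠ j % n := mod_shift_ne one_pos (by omega)
  have m2 : (j+2) % n ≠ j % n := mod_shift_ne (by omega) (by omega)
  have m21 : (j+2) % n ≠ (j+1) % n := by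
    have := mod_shift_ne (n := n) (k := j+1) one_pos (by omega)
    simpa [Nat.add_assoc] using this
  apply mkMinor H
    {e (Sum.inl true), b}
    {e (AF n (j+1))}
    {e (BF n (j+1))}
    {e (BF n j)}
    {e (AF n j), e (Sum.inl false), e (AF n (j+2)), e (BF n (j+2))}
  · exact ⟨⟨b, by simp⟩, ⟨e (AF n (j+1)), by simp⟩, ⟨e (BF n (j+1)), by simp⟩,
      ⟨e (BF n j), by simp⟩, ⟨e (AF n j), by simp⟩⟩
  · refine ⟨?_, ?_, ?_, ?_, ?_⟩
    · exact SimpleGraph.induce_pair_connected_of_adj hbv2.symm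
    · exact induce_singleton_connected _ _
    · exact induce_singleton_connected _ _
    · exact induce_singleton_connected _ _
    · have h1 := SimpleGraph.induce_pair_connected_of_adj
        (e.map_adj_iff.mpr (adj_rung (n := n) (j+2)))
      have h2 := induce_insert_connected h1
        (show e (AF n (j+2)) ∈ ({e (AF n (j+2)), e (BF n (j+2))} : Set W) by simp)
        (e.map_adj_iff.mpr (adj_v1_AF (j+2)))
      exact induce_insert_connected h2
        (show e (Sum.inl false) ∈
          insert (e (Sum.inl false)) ({e (AF n (j+2)), e (BF n (j+2))} : Set W) by simp)
        (e.map_adj_iff.mpr (adj_v1_AF j)).symm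
  · refine ⟨?_, ?_, ?_, ?_, ?_, ?_, ?_, ?_, ?_, ?_⟩ <;>
      (rw [Set.disjoint_left]
       intro x hx hy
       simp only [Set.mem_insert_iff, Set.mem_singleton_iff] at hx hy) <;>
      rcases hx with rfl | rfl <;>
      simp_all [einj.eq_iff, AF, BF, Fin.ext_iff]
  · refine ⟨?_, ?_, ?_, ?_, ?_, ?_, ?_, ?_, ?_, ?_⟩
    · exact ⟨b, by simp, _, by simp, hab.symm⟩
    · exact ⟨e (Sum.inl true), by simp, _, by simp, e.map_adj_iff.mpr (adj_v2_BF (j+1))⟩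
    · exact ⟨e (Sum.inl true), by simp, _, by simp, e.map_adj_iff.mpr (adj_v2_BF j)⟩
    · exact ⟨e (Sum.inl true), by simp, e (BF n (j+2)), by simp,
        e.map_adj_iff.mpr (adj_v2_BF (j+2))⟩
    · exact ⟨_, by simp, _, by simp, e.map_adj_iff.mpr (adj_rung (j+1))⟩
    · exact ⟨_, by simp, _, by simp, e.map_adj_iff.mpr (adj_diag hn j)⟩
    · exact ⟨e (AF n (j+1)), by simp, e (AF n j), by simp,
        (e.map_adj_iff.mpr (adj_AA hn j)).symm⟩
    · exact ⟨_, by simp, _, by simp, (e.map_adj_iff.mpr (adj_BB hn j)).symm⟩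
    · exact ⟨e (BF n (j+1)), by simp, e (BF n (j+2)), by simp,
        e.map_adj_iff.mpr (adj_BB hn (j+1))⟩
    · exact ⟨e (BF n j), by simp, e (AF n j), by simp,
        (e.map_adj_iff.mpr (adj_rung j)).symm⟩


/- ### Case III minor: `a` outside the image, `b = e (BF (k+1))`. -/
lemma minor_caseIII {W : Type} {H : SimpleGraph W} (hn : 3 ≤ n) (e : Dr n ↪g H)
    (k : ℕ) (a : W) (har : a ∉ Set.range e)
    (hav1 : H.Adj (e (Sum.inl false)) a) (hab : H.Adj a (e (BF n (k+1)))) :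
    HasMinor H (⊤ : SimpleGraph (Fin 5)) := by
  have ha' : ∀ u, a ≠ e u := fun u h => har ⟨u, h.symm⟩
  have ha'' : ∀ u, e u ≠ a := fun u h => har ⟨u, h⟩
  have einj := e.injective
  have m1 : (k+1) % n ≠ k % n := mod_shift_ne one_pos (by omega)
  have m2 : (k+2) % n ≠ k % n := mod_shift_ne (by omega) (by omega)
  have m21 : (k+2) % n ≠ (k+1) % n := by
    have := mod_shift_ne (n := n) (k := k+1) one_pos (by omega)
    simpa [Nat.add_assoc] using this
  apply mkMinor H
    {e (Sum.inl false), a}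
    {e (BF n (k+1))}
    {e (AF n (k+1))}
    {e (AF n (k+2))}
    {e (BF n (k+2)), e (Sum.inl true), e (BF n k), e (AF n k)}
  · exact ⟨⟨a, by simp⟩, ⟨e (BF n (k+1)), by simp⟩, ⟨e (AF n (k+1)), by simp⟩,
      ⟨e (AF n (k+2)), by simp⟩, ⟨e (AF n k), by simp⟩⟩
  · refine ⟨?_, ?_, ?_, ?_, ?_⟩
    · exact SimpleGraph.induce_pair_connected_of_adj hav1
    · exact induce_singleton_connected _ _
    · exact induce_singleton_connected _ _
    · exact induce_singleton_connected _ _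
    · have h1 := SimpleGraph.induce_pair_connected_of_adj
        ((e.map_adj_iff.mpr (adj_rung (n := n) k)).symm)
      have h2 := induce_insert_connected h1
        (show e (BF n k) ∈ ({e (BF n k), e (AF n k)} : Set W) by simp)
        (e.map_adj_iff.mpr (adj_v2_BF k))
      exact induce_insert_connected h2
        (show e (Sum.inl true) ∈
          insert (e (Sum.inl true)) ({e (BF n k), e (AF n k)} : Set W) by simp)
        (e.map_adj_iff.mpr (adj_v2_BF (k+2))).symm
  · refine ⟨?_, ?_, ?_, ?_, ?_, ?_, ?_, ?_, ?_, ?_⟩ <;>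
      (rw [Set.disjoint_left]
       intro x hx hy
       simp only [Set.mem_insert_iff, Set.mem_singleton_iff] at hx hy) <;>
      rcases hx with rfl | rfl <;>
      simp_all [einj.eq_iff, AF, BF, Fin.ext_iff]
  · refine ⟨?_, ?_, ?_, ?_, ?_, ?_, ?_, ?_, ?_, ?_⟩
    · exact ⟨a, by simp, _, by simp, hab⟩
    · exact ⟨e (Sum.inl false), by simp, _, by simp, e.map_adj_iff.mpr (adj_v1_AF (k+1))⟩
    · exact ⟨e (Sum.inl false), by simp, _, by simp, e.map_adj_iff.mpr (adj_v1_AF (k+2))⟩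
    · exact ⟨e (Sum.inl false), by simp, e (AF n k), by simp,
        e.map_adj_iff.mpr (adj_v1_AF k)⟩
    · exact ⟨_, by simp, _, by simp, (e.map_adj_iff.mpr (adj_rung (k+1))).symm⟩
    · exact ⟨_, by simp, _, by simp, (e.map_adj_iff.mpr (adj_diag hn (k+1))).symm⟩
    · exact ⟨e (BF n (k+1)), by simp, e (BF n k), by simp,
        (e.map_adj_iff.mpr (adj_BB hn k)).symm⟩
    · exact ⟨_, by simp, _, by simp, e.map_adj_iff.mpr (adj_AA hn (k+1))⟩
    · exact ⟨e (AF n (k+1)), by simp, e (BF n k), by simp,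
        e.map_adj_iff.mpr (adj_diag hn k)⟩
    · exact ⟨e (AF n (k+2)), by simp, e (BF n (k+2)), by simp,
        e.map_adj_iff.mpr (adj_rung (k+2))⟩

/- ### Case I minor: both `a` and `b` outside the image. -/
lemma minor_caseI {W : Type} {H : SimpleGraph W} (hn : 3 ≤ n) (e : Dr n ↪g H)
    (a b : W) (har : a ∉ Set.range e) (hbr : b ∉ Set.range e)
    (hav1 : H.Adj (e (Sum.inl false)) a) (hab : H.Adj a b)
    (hbv2 : H.Adj b (e (Sum.inl true))) :
    HasMinor H (⊤ : SimpleGraph (Fin 5)) := by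
  have ha' : ∀ u, a ≠ e u := fun u h => har ⟨u, h.symm⟩
  have hb' : ∀ u, b ≠ e u := fun u h => hbr ⟨u, h.symm⟩
  have einj := e.injective
  have hz : (0 : ℕ) % n = 0 := Nat.zero_mod n
  have h1n : 1 % n = 1 := Nat.mod_eq_of_lt (by omega)
  have h2n : 2 % n = 2 := Nat.mod_eq_of_lt (by omega)
  have hn1 : (n-1) % n = n-1 := Nat.mod_eq_of_lt (by omega)
  have hwrap : AF n (n-1+1) = AF n 0 := AF_congr (by
    have h : n - 1 + 1 = n := by omega
    rw [h, Nat.mod_self, Nat.zero_mod])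
  apply mkMinor H
    {e (Sum.inl false), a, b}
    {e (Sum.inl true)}
    {e (AF n 0), e (BF n 0)}
    {e (AF n 1), e (BF n 1)}
    (insert (e (BF n (n-1))) {x | ∃ k, 2 ≤ k ∧ k ≤ n-1 ∧ x = e (AF n k)})
  · refine ⟨⟨a, by simp⟩, ⟨e (Sum.inl true), by simp⟩, ⟨e (AF n 0), by simp⟩,
      ⟨e (AF n 1), by simp⟩, ⟨e (BF n (n-1)), by simp⟩⟩
  · refine ⟨?_, ?_, ?_, ?_, ?_⟩
    · exact induce_insert_connected (SimpleGraph.induce_pair_connected_of_adj hab)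
        (show a ∈ ({a, b} : Set W) by simp) hav1
    · exact induce_singleton_connected _ _
    · exact SimpleGraph.induce_pair_connected_of_adj (e.map_adj_iff.mpr (adj_rung 0))
    · exact SimpleGraph.induce_pair_connected_of_adj (e.map_adj_iff.mpr (adj_rung 1))
    · have hchain := chain_connected H (fun k => e (AF n k)) (n-1) (n-1-2) 2 rfl
        (by omega) (fun k hk1 hk2 => e.map_adj_iff.mpr (adj_AA hn k))
      exact induce_insert_connected hchain
        (show e (AF n (n-1)) ∈ {x | ∃ k, 2 ≤ k ∧ k ≤ n-1 ∧ x = e (AF n k)} from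
          ⟨n-1, by omega, le_refl _, rfl⟩)
        (e.map_adj_iff.mpr (adj_rung (n-1))).symm
  · have eAA : ∀ {k l : ℕ}, e (AF n k) = e (AF n l) → k % n = l % n :=
      fun h => AF_inj (einj h)
    have eBB : ∀ {k l : ℕ}, e (BF n k) = e (BF n l) → k % n = l % n :=
      fun h => BF_inj (einj h)
    have eAB : ∀ {k l : ℕ}, e (AF n k) ≠ e (BF n l) :=
      fun h => AF_ne_BF _ _ (einj h)
    have eAv : ∀ {k : ℕ} {c : Bool}, e (AF n k) ≠ e (Sum.inl c) :=
      fun h => AF_ne_inl _ _ (einj h)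
    have eBv : ∀ {k : ℕ} {c : Bool}, e (BF n k) ≠ e (Sum.inl c) :=
      fun h => BF_ne_inl _ _ (einj h)
    have evv : e (Sum.inl false) ≠ e (Sum.inl true) := fun h => by simpa using einj h
    refine ⟨?_, ?_, ?_, ?_, ?_, ?_, ?_, ?_, ?_, ?_⟩
    · rw [Set.disjoint_left]
      intro x hx hy
      simp only [Set.mem_insert_iff, Set.mem_singleton_iff, Set.mem_setOf_eq] at hx hy
      rcases hx with h1 | h1 | h1 <;> have h2 := hy <;>
        (try have hkk : k % n = k := Nat.mod_eq_of_lt (by omega)) <;>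
        (have h := h1.symm.trans h2
         first
         | exact eAB h
         | exact eAB h.symm
         | exact eAv h
         | exact eAv h.symm
         | exact eBv h
         | exact eBv h.symm
         | exact evv h
         | exact evv h.symm
         | exact ha' _ h
         | exact ha' _ h.symm
         | exact hb' _ h
         | exact hb' _ h.symm
         | (have h' := eAA h
            simp only [hz, h1n, h2n, hn1] at h'
            try rw [hkk] at h'
            omega)
         | (have h' := eBB h
            simp only [hz, h1n, h2n, hn1] at h'
            try rw [hkk] at h'
            omega))
    · rw [Set.disjoint_left]
      intro x hx hy
      simp only [Set.mem_insert_iff, Set.mem_singleton_iff, Set.mem_setOf_eq] at hx hy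
      rcases hx with h1 | h1 | h1 <;> rcases hy with h2 | h2 <;>
        (try have hkk : k % n = k := Nat.mod_eq_of_lt (by omega)) <;>
        (have h := h1.symm.trans h2
         first
         | exact eAB h
         | exact eAB h.symm
         | exact eAv h
         | exact eAv h.symm
         | exact eBv h
         | exact eBv h.symm
         | exact evv h
         | exact evv h.symm
         | exact ha' _ h
         | exact ha' _ h.symm
         | exact hb' _ h
         | exact hb' _ h.symm
         | (have h' := eAA h
            simp only [hz, h1n, h2n, hn1] at h'
            try rw [hkk] at h'
            omega)
         | (have h' := eBB h
            simp only [hz, h1n, h2n, hn1] at h'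
            try rw [hkk] at h'
            omega))
    · rw [Set.disjoint_left]
      intro x hx hy
      simp only [Set.mem_insert_iff, Set.mem_singleton_iff, Set.mem_setOf_eq] at hx hy
      rcases hx with h1 | h1 | h1 <;> rcases hy with h2 | h2 <;>
        (try have hkk : k % n = k := Nat.mod_eq_of_lt (by omega)) <;>
        (have h := h1.symm.trans h2
         first
         | exact eAB h
         | exact eAB h.symm
         | exact eAv h
         | exact eAv h.symm
         | exact eBv h
         | exact eBv h.symm
         | exact evv h
         | exact evv h.symm
         | exact ha' _ h
         | exact ha' _ h.symm
         | exact hb' _ h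
         | exact hb' _ h.symm
         | (have h' := eAA h
            simp only [hz, h1n, h2n, hn1] at h'
            try rw [hkk] at h'
            omega)
         | (have h' := eBB h
            simp only [hz, h1n, h2n, hn1] at h'
            try rw [hkk] at h'
            omega))
    · rw [Set.disjoint_left]
      intro x hx hy
      simp only [Set.mem_insert_iff, Set.mem_singleton_iff, Set.mem_setOf_eq] at hx hy
      rcases hx with h1 | h1 | h1 <;> rcases hy with h2 | ⟨k, hk2, hk1, h2⟩ <;>
        (try have hkk : k % n = k := Nat.mod_eq_of_lt (by omega)) <;>
        (have h := h1.symm.trans h2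
         first
         | exact eAB h
         | exact eAB h.symm
         | exact eAv h
         | exact eAv h.symm
         | exact eBv h
         | exact eBv h.symm
         | exact evv h
         | exact evv h.symm
         | exact ha' _ h
         | exact ha' _ h.symm
         | exact hb' _ h
         | exact hb' _ h.symm
         | (have h' := eAA h
            simp only [hz, h1n, h2n, hn1] at h'
            try rw [hkk] at h'
            omega)
         | (have h' := eBB h
            simp only [hz, h1n, h2n, hn1] at h'
            try rw [hkk] at h'
            omega))
    · rw [Set.disjoint_left]
      intro x hx hy
      simp only [Set.mem_insert_iff, Set.mem_singleton_iff, Set.mem_setOf_eq] at hx hy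
      have h1 := hx <;> rcases hy with h2 | h2 <;>
        (try have hkk : k % n = k := Nat.mod_eq_of_lt (by omega)) <;>
        (have h := h1.symm.trans h2
         first
         | exact eAB h
         | exact eAB h.symm
         | exact eAv h
         | exact eAv h.symm
         | exact eBv h
         | exact eBv h.symm
         | exact evv h
         | exact evv h.symm
         | exact ha' _ h
         | exact ha' _ h.symm
         | exact hb' _ h
         | exact hb' _ h.symm
         | (have h' := eAA h
            simp only [hz, h1n, h2n, hn1] at h'
            try rw [hkk] at h'
            omega)
         | (have h' := eBB h
            simp only [hz, h1n, h2n, hn1] at h'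
            try rw [hkk] at h'
            omega))
    · rw [Set.disjoint_left]
      intro x hx hy
      simp only [Set.mem_insert_iff, Set.mem_singleton_iff, Set.mem_setOf_eq] at hx hy
      have h1 := hx <;> rcases hy with h2 | h2 <;>
        (try have hkk : k % n = k := Nat.mod_eq_of_lt (by omega)) <;>
        (have h := h1.symm.trans h2
         first
         | exact eAB h
         | exact eAB h.symm
         | exact eAv h
         | exact eAv h.symm
         | exact eBv h
         | exact eBv h.symm
         | exact evv h
         | exact evv h.symm
         | exact ha' _ h
         | exact ha' _ h.symm
         | exact hb' _ h
         | exact hb' _ h.symm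
         | (have h' := eAA h
            simp only [hz, h1n, h2n, hn1] at h'
            try rw [hkk] at h'
            omega)
         | (have h' := eBB h
            simp only [hz, h1n, h2n, hn1] at h'
            try rw [hkk] at h'
            omega))
    · rw [Set.disjoint_left]
      intro x hx hy
      simp only [Set.mem_insert_iff, Set.mem_singleton_iff, Set.mem_setOf_eq] at hx hy
      have h1 := hx <;> rcases hy with h2 | ⟨k, hk2, hk1, h2⟩ <;>
        (try have hkk : k % n = k := Nat.mod_eq_of_lt (by omega)) <;>
        (have h := h1.symm.trans h2
         first
         | exact eAB h
         | exact eAB h.symm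
         | exact eAv h
         | exact eAv h.symm
         | exact eBv h
         | exact eBv h.symm
         | exact evv h
         | exact evv h.symm
         | exact ha' _ h
         | exact ha' _ h.symm
         | exact hb' _ h
         | exact hb' _ h.symm
         | (have h' := eAA h
            simp only [hz, h1n, h2n, hn1] at h'
            try rw [hkk] at h'
            omega)
         | (have h' := eBB h
            simp only [hz, h1n, h2n, hn1] at h'
            try rw [hkk] at h'
            omega))
    · rw [Set.disjoint_left]
      intro x hx hy
      simp only [Set.mem_insert_iff, Set.mem_singleton_iff, Set.mem_setOf_eq] at hx hy
      rcases hx with h1 | h1 <;> rcases hy with h2 | h2 <;>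
        (try have hkk : k % n = k := Nat.mod_eq_of_lt (by omega)) <;>
        (have h := h1.symm.trans h2
         first
         | exact eAB h
         | exact eAB h.symm
         | exact eAv h
         | exact eAv h.symm
         | exact eBv h
         | exact eBv h.symm
         | exact evv h
         | exact evv h.symm
         | exact ha' _ h
         | exact ha' _ h.symm
         | exact hb' _ h
         | exact hb' _ h.symm
         | (have h' := eAA h
            simp only [hz, h1n, h2n, hn1] at h'
            try rw [hkk] at h'
            omega)
         | (have h' := eBB h
            simp only [hz, h1n, h2n, hn1] at h'
            try rw [hkk] at h'
            omega))
    · rw [Set.disjoint_left]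
      intro x hx hy
      simp only [Set.mem_insert_iff, Set.mem_singleton_iff, Set.mem_setOf_eq] at hx hy
      rcases hx with h1 | h1 <;> rcases hy with h2 | ⟨k, hk2, hk1, h2⟩ <;>
        (try have hkk : k % n = k := Nat.mod_eq_of_lt (by omega)) <;>
        (have h := h1.symm.trans h2
         first
         | exact eAB h
         | exact eAB h.symm
         | exact eAv h
         | exact eAv h.symm
         | exact eBv h
         | exact eBv h.symm
         | exact evv h
         | exact evv h.symm
         | exact ha' _ h
         | exact ha' _ h.symm
         | exact hb' _ h
         | exact hb' _ h.symm
         | (have h' := eAA h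
            simp only [hz, h1n, h2n, hn1] at h'
            try rw [hkk] at h'
            omega)
         | (have h' := eBB h
            simp only [hz, h1n, h2n, hn1] at h'
            try rw [hkk] at h'
            omega))
    · rw [Set.disjoint_left]
      intro x hx hy
      simp only [Set.mem_insert_iff, Set.mem_singleton_iff, Set.mem_setOf_eq] at hx hy
      rcases hx with h1 | h1 <;> rcases hy with h2 | ⟨k, hk2, hk1, h2⟩ <;>
        (try have hkk : k % n = k := Nat.mod_eq_of_lt (by omega)) <;>
        (have h := h1.symm.trans h2
         first
         | exact eAB h
         | exact eAB h.symm
         | exact eAv h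
         | exact eAv h.symm
         | exact eBv h
         | exact eBv h.symm
         | exact evv h
         | exact evv h.symm
         | exact ha' _ h
         | exact ha' _ h.symm
         | exact hb' _ h
         | exact hb' _ h.symm
         | (have h' := eAA h
            simp only [hz, h1n, h2n, hn1] at h'
            try rw [hkk] at h'
            omega)
         | (have h' := eBB h
            simp only [hz, h1n, h2n, hn1] at h'
            try rw [hkk] at h'
            omega))
  · refine ⟨?_, ?_, ?_, ?_, ?_, ?_, ?_, ?_, ?_, ?_⟩
    · exact ⟨b, by simp, e (Sum.inl true), by simp, hbv2⟩
    · exact ⟨e (Sum.inl false), by simp, e (AF n 0), by simp,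
        e.map_adj_iff.mpr (adj_v1_AF 0)⟩
    · exact ⟨e (Sum.inl false), by simp, e (AF n 1), by simp,
        e.map_adj_iff.mpr (adj_v1_AF 1)⟩
    · exact ⟨e (Sum.inl false), by simp, e (AF n 2),
        Set.mem_insert_iff.mpr (Or.inr ⟨2, le_refl _, by omega, rfl⟩),
        e.map_adj_iff.mpr (adj_v1_AF 2)⟩
    · exact ⟨e (Sum.inl true), by simp, e (BF n 0), by simp,
        e.map_adj_iff.mpr (adj_v2_BF 0)⟩
    · exact ⟨e (Sum.inl true), by simp, e (BF n 1), by simp,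
        e.map_adj_iff.mpr (adj_v2_BF 1)⟩
    · exact ⟨e (Sum.inl true), by simp, e (BF n (n-1)), by simp,
        e.map_adj_iff.mpr (adj_v2_BF (n-1))⟩
    · exact ⟨e (AF n 0), by simp, e (AF n 1),  by simp,
        e.map_adj_iff.mpr (AF_congr (n := n) (l := 0+1) rfl ▸ adj_AA hn 0)⟩
    · refine ⟨e (AF n 0), by simp, e (AF n (n-1)),
        Set.mem_insert_iff.mpr (Or.inr ⟨n-1, by omega, le_refl _, rfl⟩), ?_⟩
      have h := e.map_adj_iff.mpr (adj_AA hn (n-1))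
      rw [hwrap] at h
      exact h.symm
    · exact ⟨e (AF n 1), by simp, e (AF n 2),
        Set.mem_insert_iff.mpr (Or.inr ⟨2, le_refl _, by omega, rfl⟩),
        e.map_adj_iff.mpr (adj_AA hn 1)⟩


lemma adj_v1_inv {u : Bool ⊕ Bool × Fin n} (h : (Dr n).Adj (Sum.inl false) u) :
    ∃ i : Fin n, u = Sum.inr (false, i) := by
  rcases u with c | ⟨c, i⟩
  · exfalso; revert h; simp [Dr, SimpleGraph.fromRel_adj]
  · cases c
    · exact ⟨i, rfl⟩
    · exfalso; revert h; simp [Dr, SimpleGraph.fromRel_adj]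

lemma adj_v2_inv {u : Bool ⊕ Bool × Fin n} (h : (Dr n).Adj u (Sum.inl true)) :
    ∃ i : Fin n, u = Sum.inr (true, i) := by
  rcases u with c | ⟨c, i⟩
  · exfalso; revert h; simp [Dr, SimpleGraph.fromRel_adj]
  · cases c
    · exfalso; revert h; simp [Dr, SimpleGraph.fromRel_adj]
    · exact ⟨i, rfl⟩

lemma adj_AB_inv {i j : Fin n}
    (h : (Dr n).Adj (Sum.inr (false, i)) (Sum.inr (true, j))) :
    (i : ℕ) = (j : ℕ) ∨ (i : ℕ) = (j : ℕ) + 1 ∨ ((i : ℕ) = 0 ∧ (j : ℕ) = n - 1) := by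
  revert h; simp [Dr, SimpleGraph.fromRel_adj]

end DrAux

open DrAux

/-- If `H` is `K₅`-minor-free and contains `D n` (for some `n ≥ 3`) as
an induced subgraph, then `H` satisfies the sentence `φ`: there are `x₁, x₂, y, z` with
`E(x₁,y), E(y,z), E(z,x₂)` such that for all `a, b` with `E(x₁,a), E(a,b), E(b,x₂)` there
are `c, d` with `E(x₁,c), E(a,c), E(b,c), E(b,d), E(c,d), E(d,x₂)`. -/
theorem Dr_induced_implies_phi {W : Type} (H : SimpleGraph W)
    (hK5 : ¬ HasMinor H (⊤ : SimpleGraph (Fin 5)))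
    (n : ℕ) (hn : 3 ≤ n) (e : Dr n ↪g H) :
    ∃ x₁ x₂ y z, H.Adj x₁ y ∧ H.Adj y z ∧ H.Adj z x₂ ∧
      ∀ a b, H.Adj x₁ a → H.Adj a b → H.Adj b x₂ →
        ∃ c d, H.Adj x₁ c ∧ H.Adj a c ∧ H.Adj b c ∧ H.Adj b d ∧ H.Adj c d ∧ H.Adj d x₂ := by
  haveI : NeZero n := ⟨by omega⟩
  refine ⟨e (Sum.inl false), e (Sum.inl true), e (AF n 0), e (BF n 0),
    e.map_adj_iff.mpr (adj_v1_AF 0), e.map_adj_iff.mpr (adj_rung 0),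
    (e.map_adj_iff.mpr (adj_v2_BF 0)).symm, ?_⟩
  intro a b ha hab hb
  by_cases hma : a ∈ Set.range e
  · obtain ⟨ua, rfl⟩ := hma
    obtain ⟨i, rfl⟩ := adj_v1_inv (e.map_adj_iff.mp ha)
    by_cases hmb : b ∈ Set.range e
    · -- both in the image: the good case
      obtain ⟨ub, rfl⟩ := hmb
      obtain ⟨j, rfl⟩ := adj_v2_inv (e.map_adj_iff.mp hb)
      have hij := adj_AB_inv (e.map_adj_iff.mp hab)
      have hae : (Sum.inr (false, i) : Bool ⊕ Bool × Fin n) = AF n (i : ℕ) := AF_of_fin i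
      have hbe : (Sum.inr (true, j) : Bool ⊕ Bool × Fin n) = BF n (j : ℕ) := BF_of_fin j
      rw [hae, hbe] at *
      rcases hij with hij | hij | ⟨hi0, hjn⟩
      · -- i = j : next rung
        have haj : AF n (i : ℕ) = AF n (j : ℕ) := AF_congr (by rw [hij])
        rw [haj]
        refine ⟨e (AF n ((j:ℕ)+1)), e (BF n ((j:ℕ)+1)), ?_, ?_, ?_, ?_, ?_, ?_⟩
        · exact e.map_adj_iff.mpr (adj_v1_AF _)
        · exact e.map_adj_iff.mpr (adj_AA hn _)
        · exact (e.map_adj_iff.mpr (adj_diag hn _)).symm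
        · exact e.map_adj_iff.mpr (adj_BB hn _)
        · exact e.map_adj_iff.mpr (adj_rung _)
        · exact (e.map_adj_iff.mpr (adj_v2_BF _)).symm
      · -- i = j + 1 : previous rung
        have haj : AF n (i : ℕ) = AF n ((j:ℕ)+1) := AF_congr (by
          rw [hij])
        rw [haj]
        have hper : (j:ℕ) + n - 1 + 1 = (j:ℕ) + n := by omega
        have hBper : BF n ((j:ℕ) + n) = BF n (j:ℕ) := BF_congr (Nat.add_mod_right _ _)
        have hAper : AF n ((j:ℕ) + n) = AF n (j:ℕ) := AF_congr (Nat.add_mod_right _ _)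
        refine ⟨e (AF n (j:ℕ)), e (BF n ((j:ℕ)+n-1)), ?_, ?_, ?_, ?_, ?_, ?_⟩
        · exact e.map_adj_iff.mpr (adj_v1_AF _)
        · exact (e.map_adj_iff.mpr (adj_AA hn _)).symm
        · exact (e.map_adj_iff.mpr (adj_rung _)).symm
        · have h := e.map_adj_iff.mpr (adj_BB hn ((j:ℕ)+n-1))
          rw [hper, hBper] at h
          exact h.symm
        · have h := e.map_adj_iff.mpr (adj_diag hn ((j:ℕ)+n-1))
          rw [hper, hAper] at h
          exact h
        · exact (e.map_adj_iff.mpr (adj_v2_BF _)).symm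
      · -- wrap: i = 0, j = n-1, i.e. i ≡ j+1 (mod n)
        have haj : AF n (i : ℕ) = AF n ((j:ℕ)+1) := AF_congr (by
          rw [hi0, hjn]
          have h : n - 1 + 1 = n := by omega
          rw [h, Nat.mod_self, Nat.zero_mod])
        rw [haj]
        have hper : (j:ℕ) + n - 1 + 1 = (j:ℕ) + n := by omega
        have hBper : BF n ((j:ℕ) + n) = BF n (j:ℕ) := BF_congr (Nat.add_mod_right _ _)
        have hAper : AF n ((j:ℕ) + n) = AF n (j:ℕ) := AF_congr (Nat.add_mod_right _ _)
        refine ⟨e (AF n (j:ℕ)), e (BF n ((j:ℕ)+n-1)), ?_, ?_, ?_, ?_, ?_, ?_⟩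
        · exact e.map_adj_iff.mpr (adj_v1_AF _)
        · exact (e.map_adj_iff.mpr (adj_AA hn _)).symm
        · exact (e.map_adj_iff.mpr (adj_rung _)).symm
        · have h := e.map_adj_iff.mpr (adj_BB hn ((j:ℕ)+n-1))
          rw [hper, hBper] at h
          exact h.symm
        · have h := e.map_adj_iff.mpr (adj_diag hn ((j:ℕ)+n-1))
          rw [hper, hAper] at h
          exact h
        · exact (e.map_adj_iff.mpr (adj_v2_BF _)).symm
    · -- a in image, b not : case II
      exfalso
      apply hK5
      have hae : (Sum.inr (false, i) : Bool ⊕ Bool × Fin n) = AF n ((i:ℕ) + n - 1 + 1) := by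
        rw [AF_of_fin i]
        exact AF_congr (by
          have h : (i:ℕ) + n - 1 + 1 = (i:ℕ) + n := by omega
          rw [h, Nat.add_mod_right])
      rw [hae] at hab
      exact minor_caseII hn e ((i:ℕ)+n-1) b hmb hab hb
  · by_cases hmb : b ∈ Set.range e
    · -- b in image, a not : case III
      obtain ⟨ub, rfl⟩ := hmb
      obtain ⟨j, rfl⟩ := adj_v2_inv (e.map_adj_iff.mp hb)
      exfalso
      apply hK5
      have hbe : (Sum.inr (true, j) : Bool ⊕ Bool × Fin n) = BF n ((j:ℕ) + n - 1 + 1) := by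
        rw [BF_of_fin j]
        exact BF_congr (by
          have h : (j:ℕ) + n - 1 + 1 = (j:ℕ) + n := by omega
          rw [h, Nat.add_mod_right])
      rw [hbe] at hab
      exact minor_caseIII hn e ((j:ℕ)+n-1) a hma ha hab
    · -- neither in image : case I
      exfalso
      exact hK5 (minor_caseI hn e a b hma hmb ha hab hb)
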